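/- If the number of goods is at most the number of agents (m ≤ n), then any allocation that gives each agent at most one good is a GMMS allocation: for every subset S of agents and every agent i ∈ S, v_i(A_i) ≥ μ_i(|S|, ∪_{j∈S} A_j). -/

import Mathlib

open Finset

variable {G : Type*} [DecidableEq G]

/-- `P : Fin n → Finset G` is a partition of `S` into `n` (possibly empty) bundles. -/
def IsPartition {G : Type*} [DecidableEq G] {n : ℕ} (P : Fin n → Finset G) (S : Finset G) : Prop :=
  (∀ i j : Fin n, i ≠ j → Disjoint (P i) (P j)) ∧ Finset.univ.biUnion P = S

/-- The `n`-maximin share of valuation `v` on the set of goods `S`: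
the maximum over partitions of `S` into `n` bundles of the minimum bundle value. -/
noncomputable def mms {G : Type*} [DecidableEq G] (v : G → ℝ) (n : ℕ) (S : Finset G) : ℝ :=
  sSup ((fun P : Fin n → Finset G => ⨅ i, (P i).sum v) '' {P | IsPartition P S})

lemma each_one_lb {α : Type*} [DecidableEq α] (s : Finset α) (f : α → ℕ)
    (h1 : ∀ a ∈ s, 1 ≤ f a) (h2 : ∑ a ∈ s, f a ≤ s.card) :
    ∀ a ∈ s, f a = 1 := by
  intro a ha
  have h3 : f a + ∑ b ∈ s.erase a, f b = ∑ b ∈ s, f b :=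
    Finset.add_sum_erase s f ha
  have h4 : (s.erase a).card * 1 ≤ ∑ b ∈ s.erase a, f b := by
    have := Finset.card_nsmul_le_sum (s.erase a) f 1
      (fun b hb => h1 b (Finset.mem_of_mem_erase hb))
    simpa using this
  have h5 : (s.erase a).card = s.card - 1 := Finset.card_erase_of_mem ha
  have h6 : 1 ≤ s.card := Finset.card_pos.mpr ⟨a, ha⟩
  have := h1 a ha
  omega

lemma each_one_ub {α : Type*} [DecidableEq α] (s : Finset α) (f : α → ℕ)
    (h1 : ∀ a ∈ s, f a ≤ 1) (h2 : s.card ≤ ∑ a ∈ s, f a) :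
    ∀ a ∈ s, f a = 1 := by
  intro a ha
  have h3 : f a + ∑ b ∈ s.erase a, f b = ∑ b ∈ s, f b :=
    Finset.add_sum_erase s f ha
  have h4 : ∑ b ∈ s.erase a, f b ≤ (s.erase a).card * 1 := by
    have := Finset.sum_le_card_nsmul (s.erase a) f 1
      (fun b hb => h1 b (Finset.mem_of_mem_erase hb))
    simpa using this
  have h5 : (s.erase a).card = s.card - 1 := Finset.card_erase_of_mem ha
  have h6 : 1 ≤ s.card := Finset.card_pos.mpr ⟨a, ha⟩
  have := h1 a ha
  omega

theorem stmt8 {n : ℕ} (M : Finset G) (hm : M.card ≤ n)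
    (v : Fin n → G → ℝ) (hv : ∀ i g, 0 ≤ v i g)
    (A : Fin n → Finset G) (hA : IsPartition A M) (hone : ∀ j, (A j).card ≤ 1) :
    ∀ S : Finset (Fin n), ∀ i ∈ S,
      mms (v i) S.card (S.biUnion A) ≤ (A i).sum (v i) := by
  intro S i hi
  have hvnn : 0 ≤ (A i).sum (v i) := Finset.sum_nonneg fun g _ => hv i g
  apply Real.sSup_le _ hvnn
  rintro x ⟨P, hP, rfl⟩
  obtain ⟨hPd, hPu⟩ := hP
  have hRcard : (S.biUnion A).card ≤ S.card := by
    calc (S.biUnion A).card ≤ ∑ j ∈ S, (A j).card := Finset.card_biUnion_le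
    _ ≤ ∑ _j ∈ S, 1 := Finset.sum_le_sum fun j _ => hone j
    _ = S.card := by simp
  have hbdd : BddBelow (Set.range fun k : Fin S.card => (P k).sum (v i)) :=
    Set.Finite.bddBelow (Set.finite_range _)
  by_cases hE : ∃ k, P k = ∅
  · obtain ⟨k, hk⟩ := hE
    calc ⨅ k, (P k).sum (v i) ≤ (P k).sum (v i) := ciInf_le hbdd k
    _ = 0 := by simp [hk]
    _ ≤ _ := hvnn
  · push_neg at hE
    have hcardP : ∀ k, 1 ≤ (P k).card := fun k =>
      Finset.card_pos.mpr (hE k)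
    have hsumP : ∑ k, (P k).card = (S.biUnion A).card := by
      rw [← hPu]
      exact (Finset.card_biUnion (fun a _ b _ hab => hPd a b hab)).symm
    have hsum_le : ∑ k ∈ (Finset.univ : Finset (Fin S.card)), (P k).card
        ≤ (Finset.univ : Finset (Fin S.card)).card := by
      rw [Finset.card_univ, Fintype.card_fin]
      calc ∑ k, (P k).card = (S.biUnion A).card := hsumP
      _ ≤ S.card := hRcard
    have hP1 : ∀ k, (P k).card = 1 := fun k =>
      each_one_lb Finset.univ _ (fun a _ => hcardP a) hsum_le k (Finset.mem_univ k)
    have hReq : (S.biUnion A).card = S.card := by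
      rw [← hsumP]
      simp [hP1]
    have hAsum : S.card ≤ ∑ j ∈ S, (A j).card := by
      rw [← hReq]; exact Finset.card_biUnion_le
    have hA1 : (A i).card = 1 := each_one_ub S _ (fun j _ => hone j) hAsum i hi
    obtain ⟨g, hg⟩ := Finset.card_eq_one.mp hA1
    have hgR : g ∈ S.biUnion A := Finset.mem_biUnion.mpr ⟨i, hi, by simp [hg]⟩
    rw [← hPu] at hgR
    obtain ⟨k, _, hgk⟩ := Finset.mem_biUnion.mp hgR
    have hPk : P k = {g} := Finset.eq_singleton_iff_unique_mem.mpr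
      ⟨hgk, fun b hb => by
        have := Finset.card_eq_one.mp (hP1 k)
        obtain ⟨c, hc⟩ := this
        rw [hc] at hb hgk
        simp at hb hgk; rw [hb, hgk]⟩
    show ⨅ k, (P k).sum (v i) ≤ (A i).sum (v i)
    calc ⨅ k, (P k).sum (v i) ≤ (P k).sum (v i) := ciInf_le hbdd k
    _ = (A i).sum (v i) := by rw [hPk, hg]
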